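/- Let f : ℝⁿ → ℝ be convex and x⋆ ∈ ℝⁿ with 0 ∉ ∂f(x⋆). Then the normal cone of f at x⋆, defined as N_f = {p : ⟨d,p⟩ ≤ 0 for all d in the tangent cone T_f}, equals the conic hull of the subdifferential: N_f = cone(∂f(x⋆)), where T_f = {d : f(x⋆ + t d) ≤ f(x⋆) for some t > 0}. -/

import Mathlib

open scoped RealInnerProductSpace

variable {n : ℕ}

/-- The subdifferential of `f` at `x`. -/
def subdiff (f : EuclideanSpace ℝ (Fin n) → ℝ) (x : EuclideanSpace ℝ (Fin n)) :
    Set (EuclideanSpace ℝ (Fin n)) :=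
  {u | ∀ d, f x + ⟪u, d⟫ ≤ f (x + d)}

/-- The tangent cone (of descent directions) of `f` at `x`. -/
def tangentConeOf (f : EuclideanSpace ℝ (Fin n) → ℝ) (x : EuclideanSpace ℝ (Fin n)) :
    Set (EuclideanSpace ℝ (Fin n)) :=
  {d | ∃ t > (0 : ℝ), f (x + t • d) ≤ f x}

/-- The normal cone of `f` at `x`: the polar of the tangent cone. -/
def normalConeOf (f : EuclideanSpace ℝ (Fin n) → ℝ) (x : EuclideanSpace ℝ (Fin n)) :
    Set (EuclideanSpace ℝ (Fin n)) :=
  {p | ∀ d ∈ tangentConeOf f x, ⟪d, p⟫ ≤ 0}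

/-- Key separation lemma: if `f` is nondecreasing along the ray `x + t • w` (t ≥ 0), then
there is a subgradient `u` of `f` at `x` with `⟪u, w⟫ ≥ 0`. -/
lemma exists_subgrad_ray (f : EuclideanSpace ℝ (Fin n) → ℝ)
    (hf : ConvexOn ℝ Set.univ f) (x w : EuclideanSpace ℝ (Fin n))
    (hw : ∀ t : ℝ, 0 ≤ t → f x ≤ f (x + t • w)) :
    ∃ u ∈ subdiff f x, (0:ℝ) ≤ ⟪u, w⟫ := by
  have hcont : Continuous f := by
    rw [← continuousOn_univ]
    exact hf.continuousOn isOpen_univ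
  -- open strict epigraph
  set O : Set (EuclideanSpace ℝ (Fin n) × ℝ) := {q | f q.1 < q.2} with hO
  have hOopen : IsOpen O := isOpen_lt (hcont.comp continuous_fst) continuous_snd
  have hOconv : Convex ℝ O := by
    have := hf.convex_strict_epigraph
    simpa using this
  -- the ray
  set R : Set (EuclideanSpace ℝ (Fin n) × ℝ) :=
    (fun t : ℝ => AffineMap.lineMap ((x, f x) : EuclideanSpace ℝ (Fin n) × ℝ)
      ((x + w, f x) : EuclideanSpace ℝ (Fin n) × ℝ) t) '' Set.Ici 0 with hR
  have hline : ∀ t : ℝ, AffineMap.lineMap ((x, f x) : EuclideanSpace ℝ (Fin n) × ℝ)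
      ((x + w, f x) : EuclideanSpace ℝ (Fin n) × ℝ) t = (x + t • w, f x) := by
    intro t
    simp [AffineMap.lineMap_apply, Prod.ext_iff]
    abel
  have hRdesc : ∀ q ∈ R, ∃ t : ℝ, 0 ≤ t ∧ q = (x + t • w, f x) := by
    rintro q ⟨t, ht, rfl⟩
    exact ⟨t, ht, hline t⟩
  have hRmem : ∀ t : ℝ, 0 ≤ t → ((x + t • w, f x) : EuclideanSpace ℝ (Fin n) × ℝ) ∈ R :=
    fun t ht => ⟨t, ht, hline t⟩
  have hRconv : Convex ℝ R := (convex_Ici (0:ℝ)).affine_image _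
  have hdisj : Disjoint O R := by
    rw [Set.disjoint_left]
    rintro q hq hqR
    obtain ⟨t, ht, rfl⟩ := hRdesc q hqR
    simp only [hO, Set.mem_setOf_eq] at hq
    exact absurd hq (not_lt.2 (hw t ht))
  obtain ⟨ℓ, c, hOc, hRc⟩ := geometric_hahn_banach_open hOconv hOopen hRconv hdisj
  set a : ℝ := ℓ (0, 1) with ha
  set φ : EuclideanSpace ℝ (Fin n) → ℝ := fun y => ℓ (y, 0) with hφ
  have hℓ : ∀ (y : EuclideanSpace ℝ (Fin n)) (r : ℝ), ℓ (y, r) = φ y + r * a := by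
    intro y r
    have : ((y, r) : EuclideanSpace ℝ (Fin n) × ℝ)
        = (y, 0) + r • ((0:EuclideanSpace ℝ (Fin n)), (1:ℝ)) := by
      simp [Prod.ext_iff]
    rw [this, map_add, map_smul]
    simp [hφ, ha, smul_eq_mul]
  have hφadd : ∀ y z : EuclideanSpace ℝ (Fin n), φ (y + z) = φ y + φ z := by
    intro y z
    have h : ((y + z, (0:ℝ)) : EuclideanSpace ℝ (Fin n) × ℝ) = (y, 0) + (z, 0) := by
      simp [Prod.ext_iff]
    simp only [hφ]
    rw [h, map_add]
  -- points strictly above the graph are in O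
  have hOd : ∀ (y : EuclideanSpace ℝ (Fin n)) (δ : ℝ), 0 < δ → φ y + (f y + δ) * a < c := by
    intro y δ hδ
    have hmem : ((y, f y + δ) : EuclideanSpace ℝ (Fin n) × ℝ) ∈ O := by
      simp only [hO, Set.mem_setOf_eq]; linarith
    have := hOc _ hmem
    rwa [hℓ] at this
  have hc0 : c ≤ φ x + f x * a := by
    have := hRc _ (hRmem 0 le_rfl)
    rwa [zero_smul, add_zero, hℓ] at this
  have hneg : a < 0 := by
    have h1 := hOd x 1 one_pos
    nlinarith
  -- limit δ → 0 : ℓ(y, f y) ≤ c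
  have hy : ∀ y : EuclideanSpace ℝ (Fin n), φ y + f y * a ≤ c := by
    intro y
    by_contra h
    push_neg at h
    have hδ : 0 < (φ y + f y * a - c) / (-a) := by
      apply div_pos <;> linarith
    have hkey := hOd y _ hδ
    have hane : -a ≠ 0 := by linarith
    have hmul : ((φ y + f y * a - c) / (-a)) * a = -(φ y + f y * a - c) := by
      field_simp
      ring_nf
      rw [mul_inv_cancel₀ (by linarith : a ≠ 0)]
    nlinarith
  -- φ w ≥ 0
  have hφw : 0 ≤ φ w := by
    have h1 := hRc _ (hRmem 1 zero_le_one)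
    rw [one_smul, hℓ, hφadd] at h1
    have h2 := hy x
    linarith
  -- the subgradient
  set v : EuclideanSpace ℝ (Fin n) :=
    (InnerProductSpace.toDual ℝ (EuclideanSpace ℝ (Fin n))).symm
      (ℓ.comp (ContinuousLinearMap.inl ℝ (EuclideanSpace ℝ (Fin n)) ℝ)) with hv
  have hvinner : ∀ z : EuclideanSpace ℝ (Fin n), ⟪v, z⟫ = φ z := by
    intro z
    rw [hv, InnerProductSpace.toDual_symm_apply]
    simp [hφ]
  refine ⟨(-a)⁻¹ • v, ?_, ?_⟩
  · intro dv
    have key := hy (x + dv)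
    rw [hφadd] at key
    have h2 : φ dv + f (x + dv) * a ≤ f x * a := by linarith
    have h3 : φ dv ≤ (-a) * (f (x + dv) - f x) := by nlinarith
    have h4 : (-a)⁻¹ * φ dv ≤ f (x + dv) - f x :=
      (inv_mul_le_iff₀ (by linarith)).2 h3
    rw [real_inner_smul_left, hvinner]
    linarith
  · rw [real_inner_smul_left, hvinner]
    have hinv : (0:ℝ) ≤ (-a)⁻¹ := inv_nonneg.2 (by linarith)
    exact mul_nonneg hinv hφw

/-- The subdifferential is convex. -/
lemma subdiff_convex (f : EuclideanSpace ℝ (Fin n) → ℝ) (x : EuclideanSpace ℝ (Fin n)) :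
    Convex ℝ (subdiff f x) := by
  intro u hu v hv s t hs ht hst
  intro d
  have h1 := hu d
  have h2 := hv d
  have hsum : ⟪s • u + t • v, d⟫ = s * ⟪u, d⟫ + t * ⟪v, d⟫ := by
    rw [inner_add_left, real_inner_smul_left, real_inner_smul_left]
  rw [hsum]
  have e1 : s * (f x + ⟪u, d⟫) ≤ s * f (x + d) := mul_le_mul_of_nonneg_left h1 hs
  have e2 : t * (f x + ⟪v, d⟫) ≤ t * f (x + d) := mul_le_mul_of_nonneg_left h2 ht
  have e3 : s * f x + t * f x = f x := by rw [← add_mul, hst, one_mul]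
  have e4 : s * f (x + d) + t * f (x + d) = f (x + d) := by rw [← add_mul, hst, one_mul]
  nlinarith

/-- If `f` is convex and `0 ∉ ∂f(x⋆)`, then the normal cone of `f` at `x⋆` equals the
(closed conic hull) `cone(∂f(x⋆))` of the subdifferential. -/
theorem normalCone_eq_cone_subdiff (f : EuclideanSpace ℝ (Fin n) → ℝ)
    (hf : ConvexOn ℝ Set.univ f) (xstar : EuclideanSpace ℝ (Fin n))
    (h0 : (0 : EuclideanSpace ℝ (Fin n)) ∉ subdiff f xstar) :
    normalConeOf f xstar
      = closure {p | ∃ t : ℝ, 0 ≤ t ∧ ∃ u ∈ subdiff f xstar, p = t • u} := by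
  set S := subdiff f xstar with hS
  set C : Set (EuclideanSpace ℝ (Fin n)) := {p | ∃ t : ℝ, 0 ≤ t ∧ ∃ u ∈ S, p = t • u} with hC
  -- a descent direction, from 0 ∉ S
  obtain ⟨e, he⟩ : ∃ e : EuclideanSpace ℝ (Fin n), f (xstar + e) < f xstar := by
    by_contra h
    push_neg at h
    exact h0 fun d => by simpa using h d
  -- S is nonempty
  obtain ⟨u₀, hu₀, -⟩ := exists_subgrad_ray f hf xstar 0
    (fun t _ => by simp)
  -- C ⊆ N, and N is closed
  have hCN : C ⊆ normalConeOf f xstar := by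
    rintro p ⟨t, ht, u, hu, rfl⟩ d ⟨s, hs, hd⟩
    have h1 := hu (s • d)
    have h2 : ⟪u, s • d⟫ ≤ 0 := by linarith
    rw [real_inner_smul_right] at h2
    have h3 : ⟪u, d⟫ ≤ 0 := nonpos_of_mul_nonpos_right h2 hs
    rw [real_inner_comm, real_inner_smul_left]
    exact mul_nonpos_of_nonneg_of_nonpos ht h3
  have hNclosed : IsClosed (normalConeOf f xstar) := by
    have hrw : normalConeOf f xstar =
        ⋂ d ∈ tangentConeOf f xstar, {p : EuclideanSpace ℝ (Fin n) | ⟪d, p⟫ ≤ 0} := by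
      ext p; simp [normalConeOf, Set.mem_iInter]
    rw [hrw]
    exact isClosed_biInter fun d _ =>
      isClosed_le (Continuous.inner continuous_const continuous_id) continuous_const
  apply Set.eq_of_subset_of_subset; swap
  · exact closure_minimal hCN hNclosed
  -- the hard direction: N ⊆ closure C
  intro p hp
  by_contra hpc
  -- C is a convex cone
  have hCcone : ∀ (r : ℝ), 0 < r → ∀ q ∈ C, r • q ∈ C := by
    rintro r hr q ⟨t, ht, u, hu, rfl⟩
    exact ⟨r * t, mul_nonneg hr.le ht, u, hu, (mul_smul r t u).symm⟩
  have hCadd : ∀ q₁ ∈ C, ∀ q₂ ∈ C, q₁ + q₂ ∈ C := by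
    rintro _ ⟨t₁, ht₁, u₁, hu₁, rfl⟩ _ ⟨t₂, ht₂, u₂, hu₂, rfl⟩
    rcases eq_or_lt_of_le (by linarith : (0:ℝ) ≤ t₁ + t₂) with hst | hst
    · have h1 : t₁ = 0 := by linarith
      have h2 : t₂ = 0 := by linarith
      exact ⟨0, le_rfl, u₁, hu₁, by simp [h1, h2]⟩
    · set s := t₁ + t₂
      refine ⟨s, hst.le, (t₁/s) • u₁ + (t₂/s) • u₂,
        subdiff_convex f xstar hu₁ hu₂ (div_nonneg ht₁ hst.le) (div_nonneg ht₂ hst.le)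
          (by field_simp; rfl), ?_⟩
      rw [smul_add, smul_smul, smul_smul]
      rw [mul_div_cancel₀ _ (ne_of_gt hst), mul_div_cancel₀ _ (ne_of_gt hst)]
  set K : ConvexCone ℝ (EuclideanSpace ℝ (Fin n)) :=
    { carrier := C
      smul_mem' := fun c hc x hx => hCcone c hc x hx
      add_mem' := fun _ h1 _ h2 => hCadd _ h1 _ h2 } with hK
  have hKne : (K.closure : Set (EuclideanSpace ℝ (Fin n))).Nonempty := by
    rw [ConvexCone.coe_closure]
    exact ⟨u₀, subset_closure ⟨1, zero_le_one, u₀, hu₀, (one_smul ℝ u₀).symm⟩⟩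
  have hKcl : IsClosed (K.closure : Set (EuclideanSpace ℝ (Fin n))) := by
    rw [ConvexCone.coe_closure]; exact isClosed_closure
  have hpK : p ∉ K.closure := by
    intro h
    rw [← SetLike.mem_coe, ConvexCone.coe_closure] at h
    exact hpc h
  obtain ⟨y, hy1, hy2⟩ :=
    ProperCone.hyperplane_separation' (E := EuclideanSpace ℝ (Fin n))
      ⟨K.closure.toPointedCone (.of_nonempty_of_isClosed hKne hKcl), hKcl⟩ hpK
  -- d := -y makes nonpositive inner products with all of S
  have hdS : ∀ u ∈ S, ⟪u, -y⟫ ≤ 0 := by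
    intro u hu
    have hmem : u ∈ K.closure := by
      rw [← SetLike.mem_coe, ConvexCone.coe_closure]
      exact subset_closure ⟨1, zero_le_one, u, hu, (one_smul ℝ u).symm⟩
    have := hy1 u hmem
    rw [inner_neg_right]
    linarith
  have hdp : (0:ℝ) < ⟪-y, p⟫ := by
    rw [inner_neg_left, real_inner_comm]; linarith
  -- ⟪u, e⟫ < 0 for all subgradients u
  have heS : ∀ u ∈ S, ⟪u, e⟫ < 0 := by
    intro u hu
    have := hu e
    linarith
  -- for every ε > 0, -y + ε • e lies in the tangent cone
  have hT : ∀ ε : ℝ, 0 < ε → (-y + ε • e) ∈ tangentConeOf f xstar := by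
    intro ε hε
    by_contra hnot
    have hw : ∀ t : ℝ, 0 ≤ t → f xstar ≤ f (xstar + t • (-y + ε • e)) := by
      intro t ht
      rcases eq_or_lt_of_le ht with h | h
      · simp [← h]
      · by_contra hlt
        push_neg at hlt
        exact hnot ⟨t, h, hlt.le⟩
    obtain ⟨u, hu, huw⟩ := exists_subgrad_ray f hf xstar _ hw
    rw [inner_add_right, real_inner_smul_right] at huw
    have h1 := hdS u hu
    have h2 := heS u hu
    nlinarith
  -- conclude ⟪-y, p⟫ ≤ 0, contradiction
  have hfin : ∀ ε : ℝ, 0 < ε → ⟪-y, p⟫ + ε * ⟪e, p⟫ ≤ 0 := by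
    intro ε hε
    have := hp _ (hT ε hε)
    rwa [inner_add_left, real_inner_smul_left] at this
  set I : ℝ := ⟪-y, p⟫
  set J : ℝ := ⟪e, p⟫
  rcases le_or_gt 0 J with hJ | hJ
  · have := hfin 1 one_pos
    nlinarith
  · have hε : 0 < I / (-2 * J) := div_pos hdp (by linarith)
    have h := hfin _ hε
    have hJne : J ≠ 0 := ne_of_lt hJ
    have hcalc : I / (-2 * J) * J = -(I/2) := by
      field_simp
    rw [hcalc] at h
    linarith
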